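/- In the algebra H, the images of the monomials g^i x^j y^ℓ with 0 ≤ i, j, ℓ ≤ p − 1 form a k-basis of H; in particular dim_k H = p³. -/

import Mathlib

noncomputable section

namespace JordanBos

variable (k : Type*) [Field k]

/-- Generators: `x = ι 0`, `y = ι 1`, `g = ι 2`. -/
def X : FreeAlgebra k (Fin 3) := FreeAlgebra.ι k (0 : Fin 3)
def Y : FreeAlgebra k (Fin 3) := FreeAlgebra.ι k (1 : Fin 3)
def G : FreeAlgebra k (Fin 3) := FreeAlgebra.ι k (2 : Fin 3)

/-- The defining relations of `H = B(V(1,2)) # kΓ`: the elements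
`x^p`, `y^p`, `g^p − 1`, `gx − xg`, `gy − yg − xg`, `yx − xy + (1/2)x²`
are set to `0`; `RingQuot` of this relation is the quotient by the two-sided
ideal they generate. -/
def rel (p : ℕ) : FreeAlgebra k (Fin 3) → FreeAlgebra k (Fin 3) → Prop :=
  fun a b =>
    (a = (X k) ^ p ∨ a = (Y k) ^ p ∨ a = (G k) ^ p - 1 ∨
      a = G k * X k - X k * G k ∨
      a = G k * Y k - Y k * G k - X k * G k ∨
      a = Y k * X k - X k * Y k + (2⁻¹ : k) • (X k) ^ 2) ∧ b = 0

/-- The Hopf algebra `H`. -/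
def H (p : ℕ) := RingQuot (rel k p)

instance (p : ℕ) : Ring (H k p) := inferInstanceAs (Ring (RingQuot (rel k p)))

instance (p : ℕ) : Algebra k (H k p) :=
  inferInstanceAs (Algebra k (RingQuot (rel k p)))

def xH (p : ℕ) : H k p := RingQuot.mkAlgHom k (rel k p) (X k)
def yH (p : ℕ) : H k p := RingQuot.mkAlgHom k (rel k p) (Y k)
def gH (p : ℕ) : H k p := RingQuot.mkAlgHom k (rel k p) (G k)

end JordanBos

open JordanBos
open Fin.NatCast

namespace JordanModel

variable (k : Type*) [Field k] (p : ℕ) [NeZero p]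

abbrev I (p : ℕ) := Fin p × Fin p × Fin p
abbrev V (k : Type*) [Field k] (p : ℕ) := I p → k

def e (m : I p) : V k p := Pi.basisFun k (I p) m

lemma fin_val_add (a : Fin p) (n : ℕ) (h : (a : ℕ) + n < p) :
    ((a + (n : Fin p) : Fin p) : ℕ) = (a : ℕ) + n := by
  rw [Fin.val_add, Fin.val_natCast]
  have hn : n % p = n := Nat.mod_eq_of_lt (by omega)
  rw [hn, Nat.mod_eq_of_lt h]

lemma fin_val_add_one (a : Fin p) (h : (a : ℕ) + 1 < p) :
    ((a + 1 : Fin p) : ℕ) = (a : ℕ) + 1 := by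
  have := fin_val_add p a 1 h
  simpa using this

def Gop : V k p →ₗ[k] V k p :=
  (Pi.basisFun k (I p)).constr k fun m => e k p (m.1 + 1, m.2.1, m.2.2)

def Xop : V k p →ₗ[k] V k p :=
  (Pi.basisFun k (I p)).constr k fun m =>
    if (m.2.1 : ℕ) + 1 < p then e k p (m.1, m.2.1 + 1, m.2.2) else 0

def Aop : V k p →ₗ[k] V k p :=
  (Pi.basisFun k (I p)).constr k fun m =>
    if (m.2.2 : ℕ) + 1 < p then e k p (m.1, m.2.1, m.2.2 + 1) else 0

/-- coefficient `i + j/2`. -/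
def c (i j : ℕ) : k := (i : k) + (j : k) * 2⁻¹

def Bop : V k p →ₗ[k] V k p :=
  (Pi.basisFun k (I p)).constr k fun m =>
    - c k m.1 m.2.1 •
      (if (m.2.1 : ℕ) + 1 < p then e k p (m.1, m.2.1 + 1, m.2.2) else 0)

def Yop : V k p →ₗ[k] V k p := Aop k p + Bop k p

@[simp] lemma Gop_e (m : I p) : Gop k p (e k p m) = e k p (m.1 + 1, m.2.1, m.2.2) :=
  (Pi.basisFun k (I p)).constr_basis k _ m

@[simp] lemma Xop_e (m : I p) :
    Xop k p (e k p m) =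
      if (m.2.1 : ℕ) + 1 < p then e k p (m.1, m.2.1 + 1, m.2.2) else 0 :=
  (Pi.basisFun k (I p)).constr_basis k _ m

@[simp] lemma Aop_e (m : I p) :
    Aop k p (e k p m) =
      if (m.2.2 : ℕ) + 1 < p then e k p (m.1, m.2.1, m.2.2 + 1) else 0 :=
  (Pi.basisFun k (I p)).constr_basis k _ m

@[simp] lemma Bop_e (m : I p) :
    Bop k p (e k p m) =
      - c k m.1 m.2.1 •
        (if (m.2.1 : ℕ) + 1 < p then e k p (m.1, m.2.1 + 1, m.2.2) else 0) :=
  (Pi.basisFun k (I p)).constr_basis k _ m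

lemma Yop_e (m : I p) :
    Yop k p (e k p m) =
      (if (m.2.2 : ℕ) + 1 < p then e k p (m.1, m.2.1, m.2.2 + 1) else 0)
      - c k m.1 m.2.1 •
        (if (m.2.1 : ℕ) + 1 < p then e k p (m.1, m.2.1 + 1, m.2.2) else 0) := by
  simp only [Yop, LinearMap.add_apply, Aop_e, Bop_e, neg_smul, smul_ite, smul_zero]
  split_ifs <;> abel


section Relations
variable [CharP k p]

lemma GX_comm : Gop k p * Xop k p = Xop k p * Gop k p := by
  apply (Pi.basisFun k (I p)).ext
  intro m
  show Gop k p (Xop k p (e k p m)) = Xop k p (Gop k p (e k p m))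
  simp [apply_ite (Gop k p)]

lemma cast_val_succ (i : Fin p) : (((i + 1 : Fin p) : ℕ) : k) = ((i : ℕ) : k) + 1 := by
  by_cases h : (i : ℕ) + 1 < p
  · rw [fin_val_add_one p i h]; push_cast; ring
  · have hp0 := NeZero.pos p
    have hi : (i : ℕ) = p - 1 := by have := i.isLt; omega
    have h2 : ((i + 1 : Fin p) : ℕ) = 0 := by
      rcases Nat.lt_or_ge 1 p with h' | h'
      · have : ((i + 1 : Fin p) : ℕ) = ((i : ℕ) + 1) % p := by
          rw [Fin.val_add, Fin.val_one', Nat.mod_eq_of_lt h']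
        rw [this, hi]
        have hp1 : p - 1 + 1 = p := by omega
        rw [hp1, Nat.mod_self]
      · have hp1 : p = 1 := by omega
        subst hp1
        have := (i + 1 : Fin 1).isLt
        omega
    rw [h2, hi]
    have hcast : (((p - 1 : ℕ)) : k) = (p : k) - 1 := by
      push_cast [Nat.cast_sub hp0]
      ring
    rw [hcast, CharP.cast_eq_zero k p]
    push_cast
    ring

lemma c_succ_left (i : Fin p) (j : ℕ) :
    c k ((i + 1 : Fin p) : ℕ) j = c k (i : ℕ) j + 1 := by
  unfold c
  rw [cast_val_succ]
  ring

lemma c_succ_right (i j : ℕ) : c k i (j + 1) = c k i j + 2⁻¹ := by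
  unfold c; push_cast; ring

lemma GY_comm : Gop k p * Yop k p - Yop k p * Gop k p - Xop k p * Gop k p = 0 := by
  apply (Pi.basisFun k (I p)).ext
  intro m
  show Gop k p (Yop k p (e k p m)) - Yop k p (Gop k p (e k p m))
      - Xop k p (Gop k p (e k p m)) = 0
  rw [Yop_e, Gop_e, Yop_e, Xop_e]
  simp only [map_sub, map_smul, apply_ite (Gop k p), map_zero, Gop_e]
  rw [c_succ_left]
  split_ifs with h1 h2 <;>
    simp [add_smul, one_smul] <;> abel

lemma YX_comm :
    Yop k p * Xop k p - Xop k p * Yop k p + (2⁻¹ : k) • (Xop k p) ^ 2 = 0 := by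
  apply (Pi.basisFun k (I p)).ext
  intro m
  obtain ⟨i, j, l⟩ := m
  show Yop k p (Xop k p (e k p (i, j, l))) - Xop k p (Yop k p (e k p (i, j, l)))
      + (2⁻¹ : k) • (Xop k p (Xop k p (e k p (i, j, l)))) = 0
  rw [Xop_e, Yop_e]
  by_cases hj : (j : ℕ) + 1 < p
  · have hv : ((j + 1 : Fin p) : ℕ) = (j : ℕ) + 1 := fin_val_add_one p j hj
    simp only [if_pos hj, Yop_e, map_sub, map_smul, apply_ite (Xop k p), map_zero, Xop_e, hv,
      c_succ_right]
    split_ifs with h1 h2 <;> simp [add_smul, smul_smul] <;> abel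
  · simp only [if_neg hj, map_zero, map_sub, map_smul, apply_ite (Xop k p), Xop_e, if_neg hj,
      smul_ite, smul_zero]
    split_ifs <;> simp

lemma Gop_pow (n : ℕ) (m : I p) :
    ((Gop k p) ^ n) (e k p m) = e k p (m.1 + (n : Fin p), m.2.1, m.2.2) := by
  induction n with
  | zero => simp
  | succ n ih =>
      rw [pow_succ', Module.End.mul_apply, ih, Gop_e]
      show e k p (m.1 + (n : Fin p) + 1, m.2.1, m.2.2) = _
      rw [show m.1 + (n : Fin p) + 1 = m.1 + ((n+1 : ℕ) : Fin p) by push_cast; abel]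

lemma Gop_pow_p : (Gop k p) ^ p = 1 := by
  apply (Pi.basisFun k (I p)).ext
  intro m
  show ((Gop k p) ^ p) (e k p m) = e k p m
  rw [Gop_pow]
  simp

lemma Xop_pow (n : ℕ) (m : I p) :
    ((Xop k p) ^ n) (e k p m) =
      if (m.2.1 : ℕ) + n < p then e k p (m.1, m.2.1 + (n : Fin p), m.2.2) else 0 := by
  induction n generalizing m with
  | zero => simp
  | succ n ih =>
      rw [pow_succ, Module.End.mul_apply, Xop_e]
      by_cases hj : (m.2.1 : ℕ) + 1 < p
      · rw [if_pos hj, ih]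
        have hv : ((m.2.1 + 1 : Fin p) : ℕ) = (m.2.1 : ℕ) + 1 := fin_val_add_one p m.2.1 hj
        simp only [hv]
        have hidx : m.2.1 + 1 + (n : Fin p) = m.2.1 + ((n + 1 : ℕ) : Fin p) := by
          push_cast; abel
        rw [show (m.2.1 : ℕ) + 1 + n = (m.2.1 : ℕ) + (n + 1) by ring, hidx]
      · rw [if_neg hj, map_zero, if_neg (by omega)]

lemma Xop_pow_p : (Xop k p) ^ p = 0 := by
  apply (Pi.basisFun k (I p)).ext
  intro m
  show ((Xop k p) ^ p) (e k p m) = 0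
  rw [Xop_pow, if_neg (by omega)]

lemma Aop_pow (n : ℕ) (m : I p) :
    ((Aop k p) ^ n) (e k p m) =
      if (m.2.2 : ℕ) + n < p then e k p (m.1, m.2.1, m.2.2 + (n : Fin p)) else 0 := by
  induction n generalizing m with
  | zero => simp
  | succ n ih =>
      rw [pow_succ, Module.End.mul_apply, Aop_e]
      by_cases hl : (m.2.2 : ℕ) + 1 < p
      · rw [if_pos hl, ih]
        have hv : ((m.2.2 + 1 : Fin p) : ℕ) = (m.2.2 : ℕ) + 1 := fin_val_add_one p m.2.2 hl
        simp only [hv]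
        have hidx : m.2.2 + 1 + (n : Fin p) = m.2.2 + ((n + 1 : ℕ) : Fin p) := by
          push_cast; abel
        rw [show (m.2.2 : ℕ) + 1 + n = (m.2.2 : ℕ) + (n + 1) by ring, hidx]
      · rw [if_neg hl, map_zero, if_neg (by omega)]

lemma Aop_pow_p : (Aop k p) ^ p = 0 := by
  apply (Pi.basisFun k (I p)).ext
  intro m
  show ((Aop k p) ^ p) (e k p m) = 0
  rw [Aop_pow, if_neg (by omega)]

lemma Bop_pow (n : ℕ) (m : I p) :
    ∃ a : k, ((Bop k p) ^ n) (e k p m) =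
      if (m.2.1 : ℕ) + n < p then a • e k p (m.1, m.2.1 + (n : Fin p), m.2.2) else 0 := by
  induction n generalizing m with
  | zero => exact ⟨1, by simp⟩
  | succ n ih =>
      rw [pow_succ, Module.End.mul_apply, Bop_e]
      by_cases hj : (m.2.1 : ℕ) + 1 < p
      · rw [if_pos hj]
        obtain ⟨a, ha⟩ := ih (m.1, m.2.1 + 1, m.2.2)
        refine ⟨-c k (m.1 : ℕ) (m.2.1 : ℕ) • a, ?_⟩
        rw [map_smul, ha]
        have hv : ((m.2.1 + 1 : Fin p) : ℕ) = (m.2.1 : ℕ) + 1 := fin_val_add_one p m.2.1 hj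
        simp only [hv]
        have hidx : m.2.1 + 1 + (n : Fin p) = m.2.1 + ((n + 1 : ℕ) : Fin p) := by
          push_cast; abel
        rw [show (m.2.1 : ℕ) + 1 + n = (m.2.1 : ℕ) + (n + 1) by ring, hidx]
        split_ifs <;> simp [smul_smul]
      · rw [if_neg hj]
        exact ⟨0, by rw [smul_zero, map_zero, if_neg (by omega)]⟩

lemma Bop_pow_p : (Bop k p) ^ p = 0 := by
  apply (Pi.basisFun k (I p)).ext
  intro m
  show ((Bop k p) ^ p) (e k p m) = 0
  obtain ⟨a, ha⟩ := Bop_pow k p p m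
  rw [ha, if_neg (by omega)]

lemma AB_comm : Commute (Aop k p) (Bop k p) := by
  apply (Pi.basisFun k (I p)).ext
  intro m
  show Aop k p (Bop k p (e k p m)) = Bop k p (Aop k p (e k p m))
  rw [Bop_e, Aop_e, map_smul]
  simp only [apply_ite (Aop k p), apply_ite (Bop k p), map_zero, Aop_e, Bop_e]
  split_ifs <;> simp

lemma Yop_pow_p (hp : p.Prime) : (Yop k p) ^ p = 0 := by
  haveI : Fact p.Prime := ⟨hp⟩
  haveI : Nonempty (I p) := ⟨(0, 0, 0)⟩
  haveI : CharP (Module.End k (V k p)) p :=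
    charP_of_injective_algebraMap' (A := Module.End k (V k p)) k p
  have := add_pow_char_of_commute (R := Module.End k (V k p)) p (AB_comm k p)
  rw [Yop, this, Aop_pow_p, Bop_pow_p, add_zero]

end Relations
end JordanModel


namespace JordanProof
open JordanBos

variable (k : Type*) [Field k] (p : ℕ)

local notation "mk" => RingQuot.mkAlgHom k (rel k p)

lemma hmk_x : xH k p = mk (X k) := rfl
lemma hmk_y : yH k p = mk (Y k) := rfl
lemma hmk_g : gH k p = mk (G k) := rfl

lemma hx : xH k p ^ p = 0 := by
  have h := RingQuot.mkAlgHom_rel k (show rel k p ((X k) ^ p) 0 from ⟨Or.inl rfl, rfl⟩)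
  simp only [map_pow, map_zero] at h; exact h

lemma hy : yH k p ^ p = 0 := by
  have h := RingQuot.mkAlgHom_rel k
    (show rel k p ((Y k) ^ p) 0 from ⟨Or.inr (Or.inl rfl), rfl⟩)
  simp only [map_pow, map_zero] at h; exact h

lemma hg : gH k p ^ p = 1 := by
  have h := RingQuot.mkAlgHom_rel k
    (show rel k p ((G k) ^ p - 1) 0 from ⟨Or.inr (Or.inr (Or.inl rfl)), rfl⟩)
  rw [map_sub, map_pow, map_one, map_zero, sub_eq_zero] at h
  exact h

lemma hgx : gH k p * xH k p = xH k p * gH k p := by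
  have h := RingQuot.mkAlgHom_rel k
    (show rel k p (G k * X k - X k * G k) 0 from ⟨Or.inr (Or.inr (Or.inr (Or.inl rfl))), rfl⟩)
  rw [map_sub, map_mul, map_mul, map_zero, sub_eq_zero] at h
  exact h

lemma hgy : gH k p * yH k p = yH k p * gH k p + xH k p * gH k p := by
  have h := RingQuot.mkAlgHom_rel k
    (show rel k p (G k * Y k - Y k * G k - X k * G k) 0 from
      ⟨Or.inr (Or.inr (Or.inr (Or.inr (Or.inl rfl)))), rfl⟩)
  rw [map_sub, map_sub, map_mul, map_mul, map_mul, map_zero, sub_sub, sub_eq_zero] at h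
  exact h

lemma hyx : yH k p * xH k p = xH k p * yH k p - (2⁻¹ : k) • xH k p ^ 2 := by
  have h := RingQuot.mkAlgHom_rel k
    (show rel k p (Y k * X k - X k * Y k + (2⁻¹ : k) • (X k) ^ 2) 0 from
      ⟨Or.inr (Or.inr (Or.inr (Or.inr (Or.inr rfl)))), rfl⟩)
  rw [map_add, map_sub, map_mul, map_mul, map_smul, map_pow, map_zero] at h
  have h2 : yH k p * xH k p + (2⁻¹ : k) • xH k p ^ 2 = xH k p * yH k p := by
    have := sub_eq_zero.mp (by rw [sub_add_eq_add_sub] at h; exact h)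
    exact this
  rw [← h2]; abel

lemma xg_pow (i : ℕ) : xH k p * gH k p ^ i = gH k p ^ i * xH k p := by
  induction i with
  | zero => simp
  | succ n ih =>
      rw [pow_succ, ← mul_assoc, ih, mul_assoc, ← hgx, ← mul_assoc, ← pow_succ]

lemma yg_pow (i : ℕ) :
    yH k p * gH k p ^ i = gH k p ^ i * yH k p - (i : k) • (gH k p ^ i * xH k p) := by
  induction i with
  | zero => simp
  | succ n ih =>
      have hyg : yH k p * gH k p = gH k p * yH k p - xH k p * gH k p := by
        rw [hgy]; abel
      rw [pow_succ, ← mul_assoc, ih, sub_mul, smul_mul_assoc, mul_assoc, hyg, mul_sub,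
        mul_assoc]
      simp only [← hgx, ← mul_assoc]
      push_cast
      rw [add_smul, one_smul]
      abel

lemma yx_pow (j : ℕ) :
    yH k p * xH k p ^ j
      = xH k p ^ j * yH k p - ((j : k) * 2⁻¹) • xH k p ^ (j + 1) := by
  induction j with
  | zero => simp
  | succ n ih =>
      rw [pow_succ, ← mul_assoc, ih, sub_mul, smul_mul_assoc, mul_assoc, hyx, mul_sub,
        mul_smul_comm, ← mul_assoc, ← pow_succ, ← pow_succ, ← pow_add]
      push_cast
      rw [add_mul, one_mul, add_smul]
      abel

def mono (i j l : ℕ) : H k p := gH k p ^ i * xH k p ^ j * yH k p ^ l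

lemma g_mul_mono (i j l : ℕ) : gH k p * mono k p i j l = mono k p (i + 1) j l := by
  unfold mono
  rw [← mul_assoc, ← mul_assoc, ← pow_succ']

lemma x_mul_mono (i j l : ℕ) : xH k p * mono k p i j l = mono k p i (j + 1) l := by
  unfold mono
  rw [← mul_assoc, ← mul_assoc, xg_pow, mul_assoc (gH k p ^ i), ← pow_succ']

lemma y_mul_mono (i j l : ℕ) :
    yH k p * mono k p i j l
      = mono k p i j (l + 1) - ((i : k) + (j : k) * 2⁻¹) • mono k p i (j + 1) l := by
  unfold mono
  rw [← mul_assoc, ← mul_assoc, yg_pow, sub_mul, sub_mul, smul_mul_assoc, smul_mul_assoc,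
    mul_assoc (gH k p ^ i) (yH k p) (xH k p ^ j), yx_pow, mul_sub, mul_smul_comm, sub_mul,
    smul_mul_assoc]
  rw [← mul_assoc (gH k p ^ i) (xH k p ^ j) (yH k p), mul_assoc _ (yH k p) (yH k p ^ l),
    ← pow_succ']
  rw [mul_assoc (gH k p ^ i) (xH k p) (xH k p ^ j), ← pow_succ']
  rw [add_smul]
  abel

open JordanModel

/-- The span of the PBW monomials. -/
def Smod : Submodule k (H k p) :=
  Submodule.span k
    (Set.range (fun m : I p =>
      gH k p ^ (m.1 : ℕ) * xH k p ^ (m.2.1 : ℕ) * yH k p ^ (m.2.2 : ℕ)))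

lemma mono_mem (hp : p.Prime) (i j l : ℕ) : mono k p i j l ∈ Smod k p := by
  by_cases hj : j < p
  · by_cases hl : l < p
    · have hgi : gH k p ^ i = gH k p ^ (i % p) := by
        conv_lhs => rw [show i = p * (i / p) + i % p from (Nat.div_add_mod i p).symm]
        rw [pow_add, pow_mul, hg, one_pow, one_mul]
      apply Submodule.subset_span
      refine ⟨(⟨i % p, Nat.mod_lt _ hp.pos⟩, ⟨j, hj⟩, ⟨l, hl⟩), ?_⟩
      simp only [mono]
      rw [hgi]
    · have : yH k p ^ l = 0 := by
        rw [show l = p + (l - p) by omega, pow_add, hy, zero_mul]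
      simp [mono, this]
  · have : xH k p ^ j = 0 := by
      rw [show j = p + (j - p) by omega, pow_add, hx, zero_mul]
    simp [mono, this]

lemma gen_range_eq (m : I p) :
    gH k p ^ (m.1 : ℕ) * xH k p ^ (m.2.1 : ℕ) * yH k p ^ (m.2.2 : ℕ)
      = mono k p (m.1 : ℕ) (m.2.1 : ℕ) (m.2.2 : ℕ) := rfl

lemma xH_mul_mem (hp : p.Prime) {h : H k p} (hh : h ∈ Smod k p) :
    xH k p * h ∈ Smod k p := by
  refine Submodule.span_induction (p := fun h _ => xH k p * h ∈ Smod k p)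
    ?_ ?_ ?_ ?_ hh
  · rintro _ ⟨m, rfl⟩
    show xH k p * mono k p (m.1 : ℕ) (m.2.1 : ℕ) (m.2.2 : ℕ) ∈ Smod k p
    rw [x_mul_mono]
    exact mono_mem k p hp _ _ _
  · simp [Smod]
  · intro a b _ _ ha hb
    rw [mul_add]; exact add_mem ha hb
  · intro c a _ ha
    rw [mul_smul_comm]; exact Submodule.smul_mem _ _ ha

lemma gH_mul_mem (hp : p.Prime) {h : H k p} (hh : h ∈ Smod k p) :
    gH k p * h ∈ Smod k p := by
  refine Submodule.span_induction (p := fun h _ => gH k p * h ∈ Smod k p)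
    ?_ ?_ ?_ ?_ hh
  · rintro _ ⟨m, rfl⟩
    show gH k p * mono k p (m.1 : ℕ) (m.2.1 : ℕ) (m.2.2 : ℕ) ∈ Smod k p
    rw [g_mul_mono]
    exact mono_mem k p hp _ _ _
  · simp [Smod]
  · intro a b _ _ ha hb
    rw [mul_add]; exact add_mem ha hb
  · intro c a _ ha
    rw [mul_smul_comm]; exact Submodule.smul_mem _ _ ha

lemma yH_mul_mem (hp : p.Prime) {h : H k p} (hh : h ∈ Smod k p) :
    yH k p * h ∈ Smod k p := by
  refine Submodule.span_induction (p := fun h _ => yH k p * h ∈ Smod k p)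
    ?_ ?_ ?_ ?_ hh
  · rintro _ ⟨m, rfl⟩
    show yH k p * mono k p (m.1 : ℕ) (m.2.1 : ℕ) (m.2.2 : ℕ) ∈ Smod k p
    rw [y_mul_mono]
    exact sub_mem (mono_mem k p hp _ _ _)
      (Submodule.smul_mem _ _ (mono_mem k p hp _ _ _))
  · simp [Smod]
  · intro a b _ _ ha hb
    rw [mul_add]; exact add_mem ha hb
  · intro c a _ ha
    rw [mul_smul_comm]; exact Submodule.smul_mem _ _ ha

def mkH : FreeAlgebra k (Fin 3) →ₐ[k] H k p := RingQuot.mkAlgHom k (rel k p)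

lemma mul_mem_Smod (hp : p.Prime) (a : FreeAlgebra k (Fin 3)) :
    ∀ h ∈ Smod k p, mkH k p a * h ∈ Smod k p := by
  induction a using FreeAlgebra.induction with
  | grade0 r =>
      intro h hh
      rw [AlgHom.commutes, ← Algebra.smul_def]
      exact Submodule.smul_mem _ _ hh
  | grade1 i =>
      intro h hh
      fin_cases i
      · exact xH_mul_mem k p hp hh
      · exact yH_mul_mem k p hp hh
      · exact gH_mul_mem k p hp hh
  | mul a b ha hb =>
      intro h hh
      rw [map_mul, mul_assoc]
      exact ha _ (hb _ hh)
  | add a b ha hb =>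
      intro h hh
      rw [map_add, add_mul]
      exact add_mem (ha _ hh) (hb _ hh)

lemma one_mem_Smod (hp : p.Prime) : (1 : H k p) ∈ Smod k p := by
  apply Submodule.subset_span
  exact ⟨(⟨0, hp.pos⟩, ⟨0, hp.pos⟩, ⟨0, hp.pos⟩), by simp⟩

lemma Smod_top (hp : p.Prime) : Smod k p = ⊤ := by
  rw [eq_top_iff]
  intro h _
  obtain ⟨a, rfl⟩ := RingQuot.mkAlgHom_surjective k (rel k p) h
  have := mul_mem_Smod k p hp a 1 (one_mem_Smod k p hp)
  rw [mul_one] at this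
  exact this

section Rep

variable [NeZero p] [CharP k p]

def fop : Fin 3 → Module.End k (V k p) := ![Xop k p, Yop k p, Gop k p]

lemma compat (hp : p.Prime) :
    ∀ ⦃a b⦄, rel k p a b →
      (FreeAlgebra.lift k (fop k p)) a = (FreeAlgebra.lift k (fop k p)) b := by
  rintro a b ⟨ha, rfl⟩
  have h0 : (FreeAlgebra.lift k (fop k p)) (X k) = Xop k p := by
    simp [X, fop, FreeAlgebra.lift_ι_apply]
  have h1 : (FreeAlgebra.lift k (fop k p)) (Y k) = Yop k p := by
    simp [Y, fop, FreeAlgebra.lift_ι_apply]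
  have h2 : (FreeAlgebra.lift k (fop k p)) (G k) = Gop k p := by
    simp [G, fop, FreeAlgebra.lift_ι_apply]
  rcases ha with rfl | rfl | rfl | rfl | rfl | rfl
  · rw [map_pow, h0, map_zero, Xop_pow_p]
  · rw [map_pow, h1, map_zero, Yop_pow_p k p hp]
  · rw [map_sub, map_pow, map_one, h2, map_zero, sub_eq_zero, Gop_pow_p]
  · rw [map_sub, map_mul, map_mul, h0, h2, map_zero, sub_eq_zero, GX_comm]
  · rw [map_sub, map_sub, map_mul, map_mul, map_mul, h0, h1, h2, map_zero, GY_comm]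
  · rw [map_add, map_sub, map_mul, map_mul, map_smul, map_pow, h0, h1, map_zero, YX_comm]

def piH (hp : p.Prime) : H k p →ₐ[k] Module.End k (V k p) :=
  RingQuot.liftAlgHom k ⟨FreeAlgebra.lift k (fop k p), compat k p hp⟩

lemma piH_x (hp : p.Prime) : piH k p hp (xH k p) = Xop k p := by
  rw [xH, piH]
  erw [RingQuot.liftAlgHom_mkAlgHom_apply]
  simp [X, fop, FreeAlgebra.lift_ι_apply]

lemma piH_y (hp : p.Prime) : piH k p hp (yH k p) = Yop k p := by
  rw [yH, piH]
  erw [RingQuot.liftAlgHom_mkAlgHom_apply]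
  simp [Y, fop, FreeAlgebra.lift_ι_apply]

lemma piH_g (hp : p.Prime) : piH k p hp (gH k p) = Gop k p := by
  rw [gH, piH]
  erw [RingQuot.liftAlgHom_mkAlgHom_apply]
  simp [G, fop, FreeAlgebra.lift_ι_apply]

lemma Yop_pow_e0 (n : ℕ) (hn : n < p) :
    ((Yop k p) ^ n) (e k p (0, 0, 0)) = e k p (0, 0, (n : Fin p)) := by
  induction n with
  | zero => simp
  | succ n ih =>
      rw [pow_succ', Module.End.mul_apply, ih (by omega), Yop_e]
      have hval : (((n : Fin p) : ℕ)) = n := by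
        rw [Fin.val_natCast, Nat.mod_eq_of_lt (by omega)]
      have hc : c k ((0 : Fin p) : ℕ) ((0 : Fin p) : ℕ) = 0 := by
        simp [c]
      rw [hc, zero_smul, sub_zero]
      simp only [hval]
      rw [if_pos hn]
      congr 2
      push_cast
      ring

lemma apply_e0 (hp : p.Prime) (m : I p) :
    piH k p hp (gH k p ^ (m.1 : ℕ) * xH k p ^ (m.2.1 : ℕ) * yH k p ^ (m.2.2 : ℕ))
        (e k p (0, 0, 0))
      = e k p m := by
  rw [map_mul, map_mul, map_pow, map_pow, map_pow, piH_x, piH_y, piH_g,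
    Module.End.mul_apply, Module.End.mul_apply]
  rw [Yop_pow_e0 k p _ m.2.2.isLt, Xop_pow]
  have h0 : ((0 : Fin p) : ℕ) = 0 := rfl
  rw [h0, zero_add, if_pos m.2.1.isLt]
  rw [Gop_pow]
  simp [Fin.cast_val_eq_self]

def phi (hp : p.Prime) : H k p →ₗ[k] V k p where
  toFun h := piH k p hp h (e k p (0, 0, 0))
  map_add' a b := by show piH k p hp (a + b) _ = _; rw [map_add]; rfl
  map_smul' c a := by show piH k p hp (c • a) _ = _; rw [map_smul]; rfl

lemma indep (hp : p.Prime) :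
    LinearIndependent k
      (fun m : I p =>
        gH k p ^ (m.1 : ℕ) * xH k p ^ (m.2.1 : ℕ) * yH k p ^ (m.2.2 : ℕ)) := by
  apply LinearIndependent.of_comp (phi k p hp)
  have : (phi k p hp) ∘ (fun m : I p =>
      gH k p ^ (m.1 : ℕ) * xH k p ^ (m.2.1 : ℕ) * yH k p ^ (m.2.2 : ℕ))
      = ⇑(Pi.basisFun k (I p)) := by
    funext m
    simp only [Function.comp_apply, phi]
    show piH k p hp _ (e k p (0,0,0)) = _
    rw [apply_e0]
    rfl
  rw [this]
  exact (Pi.basisFun k (I p)).linearIndependent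

end Rep

end JordanProof


/-- Let `k` be a field of odd prime characteristic `p` and
`H` the bosonization of the restricted Jordan plane.  The images of the
monomials `g^i x^j y^ℓ`, `0 ≤ i, j, ℓ ≤ p − 1`, form a `k`-basis of `H`; in
particular `dim_k H = p³`. -/
theorem jordan_bosonization_basis
    (k : Type*) [Field k] (p : ℕ) (hp : p.Prime) (hodd : Odd p)
    [CharP k p] :
    LinearIndependent k
      (fun m : Fin p × Fin p × Fin p =>
        gH k p ^ (m.1 : ℕ) * xH k p ^ (m.2.1 : ℕ) * yH k p ^ (m.2.2 : ℕ)) ∧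
    Submodule.span k
      (Set.range (fun m : Fin p × Fin p × Fin p =>
        gH k p ^ (m.1 : ℕ) * xH k p ^ (m.2.1 : ℕ) * yH k p ^ (m.2.2 : ℕ)))
      = ⊤ ∧
    Module.finrank k (H k p) = p ^ 3 := by
  haveI : NeZero p := ⟨hp.ne_zero⟩
  have hli := JordanProof.indep k p hp
  have hsp := JordanProof.Smod_top k p hp
  rw [JordanProof.Smod] at hsp
  refine ⟨hli, hsp, ?_⟩
  let b : Module.Basis (JordanModel.I p) k (H k p) := Module.Basis.mk hli hsp.ge
  rw [Module.finrank_eq_card_basis b]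
  simp only [Fintype.card_prod, Fintype.card_fin]
  ring
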